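/- Let w be a weight on (0, ∞) in the class B_p (i.e., r^p ∫_r^∞ w(t)/t^p dt ≤ C ∫₀^r w(s) ds for all r > 0) with p > 0. Then there exists q < p such that W̄(t) := sup_{s>0} W(st)/W(s) satisfies W̄(t) ≤ C' t^q for all t > 1, where W(t) = ∫₀ᵗ w. -/

import Mathlib

open MeasureTheory
open scoped ENNReal

/-- The dilation quantity `W̄(t) = sup_{s>0} W(st)/W(s)`. -/
noncomputable def WbarDil (W : ℝ → ℝ) (t : ℝ) : ℝ≥0∞ :=
  sSup {q | ∃ s > (0 : ℝ), q = ENNReal.ofReal (W (s * t) / W s)}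

/-- Ariño–Muckenhoupt: if `w ∈ B_p` (`p > 0`), i.e.
`r^p ∫_r^∞ w(t)/t^p dt ≤ C W(r)` for all `r > 0`, then `W̄(t) ≤ C' t^q` for
every `t > 1`, for some `q < p`. -/
theorem stmt_18 (w W : ℝ → ℝ) (p C : ℝ) (hp : 0 < p) (hC : 0 < C)
    (hw : ∀ t > (0 : ℝ), 0 ≤ w t)
    (hwint : ∀ r > (0 : ℝ), IntegrableOn w (Set.Ioc 0 r))
    (hW : ∀ t, W t = ∫ s in Set.Ioc (0 : ℝ) t, w s)
    (hWpos : ∀ t > (0 : ℝ), 0 < W t)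
    (hint : ∀ r > (0 : ℝ), IntegrableOn (fun t => w t / t ^ p) (Set.Ioi r))
    (hBp : ∀ r > (0 : ℝ), r ^ p * (∫ t in Set.Ioi r, w t / t ^ p) ≤ C * W r) :
    ∃ C' > (0 : ℝ), ∃ q < p, ∀ t > (1 : ℝ),
      WbarDil W t ≤ ENNReal.ofReal (C' * t ^ q) := by
  set B : ℝ → ℝ := fun r => ∫ t in Set.Ioi r, w t / t ^ p with hBdef
  set F : ℝ → ℝ := fun r => W r / r ^ p + B r with hFdef
  have h2p : (0:ℝ) < (2:ℝ) ^ (-p) := Real.rpow_pos_of_pos two_pos _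
  have h2p1 : (2:ℝ) ^ (-p) < 1 :=
    Real.rpow_lt_one_of_one_lt_of_neg one_lt_two (neg_neg_of_pos hp)
  have h1C : (1:ℝ) < 1 + C := by linarith
  set θ : ℝ := 1 - (1 - (2:ℝ)^(-p)) / (1 + C) with hθdef
  have hdpos : 0 < (1 - (2:ℝ)^(-p)) / (1 + C) := div_pos (by linarith) (by linarith)
  have hdlt : (1 - (2:ℝ)^(-p)) / (1 + C) < 1 := by
    rw [div_lt_one (by linarith)]
    linarith
  have hθ0 : 0 < θ := by simp only [hθdef]; linarith
  have hθ1 : θ < 1 := by simp only [hθdef]; linarith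
  -- integrability on Ioc chunks
  have hwintIoc : ∀ a b : ℝ, 0 < a → IntegrableOn w (Set.Ioc a b) := by
    intro a b ha
    rcases le_or_gt a b with hab | hab
    · exact (hwint b (ha.trans_le hab)).mono_set (Set.Ioc_subset_Ioc_left ha.le)
    · simp [Set.Ioc_eq_empty (not_lt.2 hab.le)]
  have hdivintIoc : ∀ a b : ℝ, 0 < a → IntegrableOn (fun t => w t / t ^ p) (Set.Ioc a b) := by
    intro a b ha
    exact (hint a ha).mono_set Set.Ioc_subset_Ioi_self
  -- W is monotone on (0,∞)
  have hWmono : ∀ a b : ℝ, 0 < a → a ≤ b → W a ≤ W b := by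
    intro a b ha hab
    rw [hW a, hW b]
    refine setIntegral_mono_set (hwint b (ha.trans_le hab)) ?_ ?_
    · exact (ae_restrict_iff' measurableSet_Ioc).2 (ae_of_all _ fun x hx => hw x hx.1)
    · exact HasSubset.Subset.eventuallyLE (Set.Ioc_subset_Ioc_right hab)
  -- additivity of W
  have hWadd : ∀ a b : ℝ, 0 < a → a ≤ b → W b = W a + ∫ t in Set.Ioc a b, w t := by
    intro a b ha hab
    rw [hW a, hW b, ← setIntegral_union (Set.Ioc_disjoint_Ioc_of_le le_rfl) measurableSet_Ioc
      (hwint a ha) (hwintIoc a b ha), Set.Ioc_union_Ioc_eq_Ioc ha.le hab]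
  -- splitting of B
  have hBsplit : ∀ a b : ℝ, 0 < a → a ≤ b →
      B a = (∫ t in Set.Ioc a b, w t / t ^ p) + B b := by
    intro a b ha hab
    simp only [hBdef]
    rw [← setIntegral_union (Set.Ioc_disjoint_Ioi le_rfl) measurableSet_Ioi
      (hdivintIoc a b ha) (hint b (ha.trans_le hab)), Set.Ioc_union_Ioi_eq_Ioi hab]
  have hBnonneg : ∀ r : ℝ, 0 < r → 0 ≤ B r := by
    intro r hr
    refine setIntegral_nonneg measurableSet_Ioi fun x hx => ?_
    exact div_nonneg (hw x (hr.trans hx)) (Real.rpow_nonneg (le_of_lt (hr.trans hx)) p)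
  -- key comparison on a chunk
  have hChunk : ∀ a b : ℝ, 0 < a → a ≤ b →
      (W b - W a) / b ^ p ≤ ∫ t in Set.Ioc a b, w t / t ^ p := by
    intro a b ha hab
    have hb : 0 < b := ha.trans_le hab
    have h1 : W b - W a = ∫ t in Set.Ioc a b, w t := by rw [hWadd a b ha hab]; ring
    rw [h1, ← integral_div]
    refine setIntegral_mono_on ((hwintIoc a b ha).div_const _) (hdivintIoc a b ha)
      measurableSet_Ioc fun x hx => ?_
    have hx0 : 0 < x := ha.trans hx.1
    exact div_le_div_of_nonneg_left (hw x hx0) (Real.rpow_pos_of_pos hx0 p)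
      (Real.rpow_le_rpow hx0.le hx.2 hp.le)
  -- F is antitone on (0,∞)
  have hFanti : ∀ a b : ℝ, 0 < a → a ≤ b → F b ≤ F a := by
    intro a b ha hab
    have hb : 0 < b := ha.trans_le hab
    have hWa := (hWpos a ha).le
    have hap : (0:ℝ) < a ^ p := Real.rpow_pos_of_pos ha p
    have hbp : (0:ℝ) < b ^ p := Real.rpow_pos_of_pos hb p
    have h1 := hChunk a b ha hab
    have h2 := hBsplit a b ha hab
    have h3 : W a / b ^ p ≤ W a / a ^ p :=
      div_le_div_of_nonneg_left hWa hap (Real.rpow_le_rpow ha.le hab hp.le)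
    have h4 : W b / b ^ p - W a / b ^ p ≤ ∫ t in Set.Ioc a b, w t / t ^ p := by
      rw [← sub_div]; exact h1
    simp only [hFdef]
    rw [h2]
    linarith
  -- bounds relating F and W
  have hFub : ∀ r : ℝ, 0 < r → F r ≤ (1 + C) * (W r / r ^ p) := by
    intro r hr
    have hrp : (0:ℝ) < r ^ p := Real.rpow_pos_of_pos hr p
    have h1 := hBp r hr
    have h2 : B r ≤ C * (W r / r ^ p) := by
      rw [← mul_div_assoc, le_div_iff₀ hrp, mul_comm]
      exact h1
    simp only [hFdef]; linarith
  have hFlb : ∀ r : ℝ, 0 < r → W r / r ^ p ≤ F r := by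
    intro r hr
    simp only [hFdef]
    linarith [hBnonneg r hr]
  have hFnonneg : ∀ r : ℝ, 0 < r → 0 ≤ F r := by
    intro r hr
    exact le_trans (div_nonneg (hWpos r hr).le (Real.rpow_nonneg hr.le p)) (hFlb r hr)
  -- contraction step
  have hcontr : ∀ s : ℝ, 0 < s → F (2 * s) ≤ θ * F s := by
    intro s hs
    have h2s : 0 < 2 * s := by linarith
    have hsp : (0:ℝ) < s ^ p := Real.rpow_pos_of_pos hs p
    have h2sp : ((2:ℝ) * s) ^ p = 2 ^ p * s ^ p := Real.mul_rpow (by norm_num) hs.le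
    have hWs := hWpos s hs
    have h1 := hChunk s (2 * s) hs (by linarith)
    have h2 := hBsplit s (2 * s) hs (by linarith)
    -- F s ≥ F (2s) + (1 - 2^{-p}) * (W s / s^p)
    have key : F (2 * s) + (1 - (2:ℝ)^(-p)) * (W s / s ^ p) ≤ F s := by
      simp only [hFdef]
      rw [h2]
      have e1 : W s / (2 * s) ^ p = (2:ℝ)^(-p) * (W s / s ^ p) := by
        rw [h2sp, Real.rpow_neg (by norm_num : (0:ℝ) ≤ 2)]
        field_simp
      have h4 : W (2*s) / (2*s) ^ p - W s / (2*s) ^ p ≤ ∫ t in Set.Ioc s (2*s), w t / t ^ p := by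
        rw [← sub_div]; exact h1
      rw [e1] at h4
      linarith
    have hub : F s / (1 + C) ≤ W s / s ^ p := by
      rw [div_le_iff₀ (by linarith : (0:ℝ) < 1 + C)]
      calc F s ≤ (1 + C) * (W s / s ^ p) := hFub s hs
        _ = W s / s ^ p * (1 + C) := by ring
    have h3 : (1 - (2:ℝ)^(-p)) * (F s / (1 + C)) ≤ (1 - (2:ℝ)^(-p)) * (W s / s ^ p) :=
      mul_le_mul_of_nonneg_left hub (by linarith)
    have : F (2 * s) ≤ F s - (1 - (2:ℝ)^(-p)) * (F s / (1 + C)) := by linarith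
    calc F (2 * s) ≤ F s - (1 - (2:ℝ)^(-p)) * (F s / (1 + C)) := this
      _ = θ * F s := by simp only [hθdef]; ring
  -- iteration
  have hiter : ∀ (n : ℕ) (s : ℝ), 0 < s → F ((2:ℝ) ^ n * s) ≤ θ ^ n * F s := by
    intro n
    induction n with
    | zero => intro s hs; simp
    | succ n ih =>
      intro s hs
      have h2n : (0:ℝ) < (2:ℝ) ^ n * s := by positivity
      have e : (2:ℝ) ^ (n+1) * s = 2 * ((2:ℝ) ^ n * s) := by ring
      calc F ((2:ℝ) ^ (n+1) * s) = F (2 * ((2:ℝ) ^ n * s)) := by rw [e]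
        _ ≤ θ * F ((2:ℝ) ^ n * s) := hcontr _ h2n
        _ ≤ θ * (θ ^ n * F s) := mul_le_mul_of_nonneg_left (ih s hs) hθ0.le
        _ = θ ^ (n+1) * F s := by ring
  -- conclusion
  refine ⟨(1 + C) / θ, by positivity, p + Real.logb 2 θ,
    by linarith [Real.logb_neg one_lt_two hθ0 hθ1], ?_⟩
  intro t ht
  have ht0 : (0:ℝ) < t := by linarith
  apply sSup_le
  rintro x ⟨s, hs, rfl⟩
  apply ENNReal.ofReal_le_ofReal
  set n : ℕ := ⌊Real.logb 2 t⌋₊ with hn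
  have hlogt : 0 ≤ Real.logb 2 t := Real.logb_nonneg one_lt_two ht.le
  have h2n : (2:ℝ) ^ n ≤ t := by
    have h1 : ((n:ℝ)) ≤ Real.logb 2 t := Nat.floor_le hlogt
    have := Real.rpow_le_rpow_of_exponent_le (le_of_lt one_lt_two) h1
    rwa [Real.rpow_natCast, Real.rpow_logb two_pos (by norm_num) ht0] at this
  have hnlb : Real.logb 2 t - 1 ≤ (n:ℝ) := by
    have := Nat.lt_floor_add_one (Real.logb 2 t)
    linarith
  have hst : 0 < s * t := by positivity
  have h2ns : 0 < (2:ℝ) ^ n * s := by positivity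
  have hstep : (2:ℝ) ^ n * s ≤ s * t := by
    calc (2:ℝ) ^ n * s ≤ t * s := mul_le_mul_of_nonneg_right h2n hs.le
      _ = s * t := by ring
  have hWs := hWpos s hs
  have hWst := hWpos (s * t) hst
  have hsp : (0:ℝ) < s ^ p := Real.rpow_pos_of_pos hs p
  have hstp : (0:ℝ) < (s * t) ^ p := Real.rpow_pos_of_pos hst p
  have chain : W (s * t) / (s * t) ^ p ≤ θ ^ n * ((1 + C) * (W s / s ^ p)) := by
    calc W (s * t) / (s * t) ^ p ≤ F (s * t) := hFlb _ hst
      _ ≤ F ((2:ℝ) ^ n * s) := hFanti _ _ h2ns hstep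
      _ ≤ θ ^ n * F s := hiter n s hs
      _ ≤ θ ^ n * ((1 + C) * (W s / s ^ p)) :=
          mul_le_mul_of_nonneg_left (hFub s hs) (by positivity)
  have hmul : W (s * t) ≤ θ ^ n * (1 + C) * W s * t ^ p := by
    have := mul_le_mul_of_nonneg_right chain hstp.le
    rw [div_mul_cancel₀ _ hstp.ne'] at this
    have e : (s * t) ^ p = s ^ p * t ^ p := Real.mul_rpow hs.le ht0.le
    calc W (s * t) ≤ θ ^ n * ((1 + C) * (W s / s ^ p)) * (s * t) ^ p := this
      _ = θ ^ n * (1 + C) * W s * t ^ p := by rw [e]; field_simp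
  -- bound θ^n by θ⁻¹ * t ^ logb 2 θ
  have hθn : (θ:ℝ) ^ n ≤ θ⁻¹ * t ^ Real.logb 2 θ := by
    have h1 : θ ^ (n:ℝ) ≤ θ ^ (Real.logb 2 t - 1) :=
      Real.rpow_le_rpow_of_exponent_ge hθ0 hθ1.le hnlb
    have e1 : θ ^ (Real.logb 2 t - 1) = θ ^ Real.logb 2 t * θ⁻¹ := by
      rw [Real.rpow_sub hθ0, Real.rpow_one, div_eq_mul_inv]
    have e2 : θ ^ Real.logb 2 t = t ^ Real.logb 2 θ := by
      rw [Real.rpow_def_of_pos hθ0, Real.rpow_def_of_pos ht0, Real.logb, Real.logb]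
      ring_nf
    rw [Real.rpow_natCast] at h1
    calc θ ^ n ≤ θ ^ (Real.logb 2 t - 1) := h1
      _ = θ⁻¹ * t ^ Real.logb 2 θ := by rw [e1, e2]; ring
  have hfinal : W (s * t) / W s ≤ (1 + C) / θ * t ^ (p + Real.logb 2 θ) := by
    rw [div_le_iff₀ hWs]
    have htlq : (0:ℝ) < t ^ Real.logb 2 θ := Real.rpow_pos_of_pos ht0 _
    have htp : (0:ℝ) < t ^ p := Real.rpow_pos_of_pos ht0 _
    calc W (s * t) ≤ θ ^ n * (1 + C) * W s * t ^ p := hmul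
      _ ≤ (θ⁻¹ * t ^ Real.logb 2 θ) * (1 + C) * W s * t ^ p := by
          have : (0:ℝ) ≤ (1 + C) * W s * t ^ p := by positivity
          nlinarith [hθn, this]
      _ = (1 + C) / θ * (t ^ Real.logb 2 θ * t ^ p) * W s := by
          field_simp
      _ = (1 + C) / θ * t ^ (p + Real.logb 2 θ) * W s := by
          rw [← Real.rpow_add ht0, add_comm (Real.logb 2 θ) p]
  exact hfinal
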